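/- (Recurrences for the André numbers.) Define integers A_{n,k} for n, k ≥ 0 by A_{0,0} = 1 and, for (n,k) ≠ (0,0), A_{n,k} = (n+1)·A_{n,k−1} + (k+1)·A_{n−1,k+1}, with the convention that any term with a negative index is 0. Then the A_{n,k} also satisfy the quadratic recursion: for all (n,k) ≠ (0,0), A_{n,k} = A_{n,k−1} + Σ_{l=0}^{n−1} Σ_{m=0}^{k} C(2n+k−1, 2l+m) · A_{l,m} · A_{n−1−l, k−m}, where C(·,·) denotes the binomial coefficient. -/

import Mathlib

open MvPolynomial Finset

namespace AndreAux


/-- exponent finsupp: x-exponent `c` (variable 0), g-exponent `b` (variable 1). -/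
noncomputable def fm (c b : ℕ) : Fin 2 →₀ ℕ := Finsupp.single 0 c + Finsupp.single 1 b

lemma fm_apply0 (c b : ℕ) : fm c b 0 = c := by
  simp [fm, Finsupp.single_apply]

lemma fm_apply1 (c b : ℕ) : fm c b 1 = b := by
  simp [fm, Finsupp.single_apply]

lemma fm_inj {c b c' b' : ℕ} (h : fm c b = fm c' b') : c = c' ∧ b = b' := by
  constructor
  · have := congrArg (fun f => (f : Fin 2 →₀ ℕ) 0) h; simpa [fm_apply0] using this
  · have := congrArg (fun f => (f : Fin 2 →₀ ℕ) 1) h; simpa [fm_apply1] using this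

lemma fm_eq_iff {c b c' b' : ℕ} : fm c b = fm c' b' ↔ c = c' ∧ b = b' := by
  constructor
  · exact fm_inj
  · rintro ⟨rfl, rfl⟩; rfl

lemma fm_add (c b c' b' : ℕ) : fm c b + fm c' b' = fm (c + c') (b + b') := by
  ext i; fin_cases i <;> simp [fm, Finsupp.single_apply]

lemma single0_eq_fm : (Finsupp.single (0 : Fin 2) 1) = fm 1 0 := by
  ext i; fin_cases i <;> simp [fm, Finsupp.single_apply]

lemma single1_eq_fm : (Finsupp.single (1 : Fin 2) 1) = fm 0 1 := by
  ext i; fin_cases i <;> simp [fm, Finsupp.single_apply]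

lemma fm_sub_single0 (c b : ℕ) :
    fm c b - Finsupp.single 0 1 = fm (c - 1) b := by
  ext i; fin_cases i <;> simp [fm, Finsupp.single_apply, Finsupp.tsub_apply]

lemma fm_sub_single1 (c b : ℕ) :
    fm c b - Finsupp.single 1 1 = fm c (b - 1) := by
  ext i; fin_cases i <;> simp [fm, Finsupp.single_apply, Finsupp.tsub_apply]

/-- the derivation δ = g ∂ₓ + x g ∂_g -/
noncomputable def dd (p : MvPolynomial (Fin 2) ℤ) : MvPolynomial (Fin 2) ℤ :=
  X 1 * pderiv 0 p + X 0 * X 1 * pderiv 1 p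

lemma dd_add (p q : MvPolynomial (Fin 2) ℤ) : dd (p + q) = dd p + dd q := by
  simp [dd]; ring

lemma dd_mul (p q : MvPolynomial (Fin 2) ℤ) : dd (p * q) = dd p * q + p * dd q := by
  simp only [dd, pderiv_mul]; ring

lemma dd_sum {α : Type*} (s : Finset α) (f : α → MvPolynomial (Fin 2) ℤ) :
    dd (∑ a ∈ s, f a) = ∑ a ∈ s, dd (f a) := by
  classical
  induction s using Finset.induction with
  | empty => simp [dd]
  | insert _ _ h ih => rw [Finset.sum_insert h, Finset.sum_insert h, dd_add, ih]

lemma dd_smul (z : ℤ) (p : MvPolynomial (Fin 2) ℤ) : dd (z • p) = z • dd p := by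
  simp only [dd, Derivation.map_smul, smul_add, mul_smul_comm]

lemma dd_X1 : dd (X 1) = X 0 * X 1 := by
  simp [dd, pderiv_X]

lemma dd_X0 : dd (X 0) = X 1 := by
  simp [dd, pderiv_X]

lemma X_mul_monomial' (i : Fin 2) (s : Fin 2 →₀ ℕ) (a : ℤ) :
    X i * monomial s a = monomial (Finsupp.single i 1 + s) a := by
  rw [X, monomial_mul, one_mul]

/-- δ on monomials x^c g^{b+1}. -/
lemma dd_monomial (c b : ℕ) (a : ℤ) :
    dd (monomial (fm c (b + 1)) a) =
      monomial (fm (c - 1) (b + 2)) (a * c) +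
      monomial (fm (c + 1) (b + 1)) (a * ((b : ℤ) + 1)) := by
  have h0 : fm c (b + 1) - Finsupp.single 0 1 = fm (c - 1) (b + 1) := fm_sub_single0 _ _
  have h1 : fm c (b + 1) - Finsupp.single 1 1 = fm c b := by
    rw [fm_sub_single1]; norm_num
  simp only [dd, pderiv_monomial, h0, h1, fm_apply0, fm_apply1]
  rw [mul_assoc, X_mul_monomial', X_mul_monomial', X_mul_monomial',
    single1_eq_fm, single0_eq_fm, fm_add, fm_add, fm_add]
  have e1 : fm (1 + (0 + c)) (0 + (1 + b)) = fm (c + 1) (b + 1) := by rw [fm_eq_iff]; omega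
  have e2 : fm (0 + (c - 1)) (1 + (b + 1)) = fm (c - 1) (b + 2) := by rw [fm_eq_iff]; omega
  rw [e1, e2]
  push_cast
  ring_nf

noncomputable def gN : ℕ → MvPolynomial (Fin 2) ℤ
  | 0 => X 1
  | (N+1) => dd (gN N)

lemma gN_zero : gN 0 = X 1 := rfl
lemma gN_succ (N : ℕ) : gN (N + 1) = dd (gN N) := rfl

lemma key (N : ℕ) : gN (N + 1) =
    X 0 * gN N + ∑ i ∈ range N, ((N.choose (i + 1) : ℤ)) • (gN i * gN (N - 1 - i)) := by
  induction N with
  | zero => simp [gN_succ, gN_zero, dd_X1]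
  | succ N ih =>
    have ih' : dd (gN N) = X 0 * gN N + ∑ i ∈ range N, ((N.choose (i + 1) : ℤ)) • (gN i * gN (N - 1 - i)) := by
      rw [← gN_succ]; exact ih
    have hstep : gN (N + 2) = dd (gN (N + 1)) := rfl
    rw [hstep, gN_succ, ih', dd_add, dd_mul, dd_X0, dd_sum]
    have hterm : ∀ i ∈ range N,
        dd ((N.choose (i + 1) : ℤ) • (gN i * gN (N - 1 - i))) =
          (N.choose (i + 1) : ℤ) • (gN (i + 1) * gN (N - 1 - i)) +
          (N.choose (i + 1) : ℤ) • (gN i * gN (N - i)) := by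
      intro i hi
      rw [dd_smul, dd_mul, ← gN_succ, ← gN_succ]
      have : N - 1 - i + 1 = N - i := by
        have := mem_range.mp hi; omega
      rw [this, smul_add]
    rw [Finset.sum_congr rfl hterm, Finset.sum_add_distrib]
    have hsplit : ∑ i ∈ range (N + 1), (((N+1).choose (i + 1) : ℤ)) • (gN i * gN (N + 1 - 1 - i)) =
        (X 1 * gN N) + (∑ i ∈ range N, ((N.choose (i + 1) : ℤ)) • (gN (i + 1) * gN (N - 1 - i)))
          + ∑ i ∈ range N, ((N.choose (i + 1) : ℤ)) • (gN i * gN (N - i)) := by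
      have e1 : ∀ i, (N + 1 - 1 - i) = N - i := by intro i; omega
      simp only [e1]
      have e2 : ∀ i, ((N+1).choose (i + 1) : ℤ) = (N.choose i : ℤ) + (N.choose (i+1) : ℤ) := by
        intro i; rw [Nat.choose_succ_succ]; push_cast; ring
      simp only [e2, add_smul]
      rw [Finset.sum_add_distrib]
      congr 1
      · rw [Finset.sum_range_succ' (fun i => ((N.choose i : ℤ)) • (gN i * gN (N - i)))]
        have e3 : ∀ x ∈ range N, ((N.choose (x+1) : ℤ)) • (gN (x+1) * gN (N - (x+1)))
            = ((N.choose (x+1) : ℤ)) • (gN (x+1) * gN (N - 1 - x)) := by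
          intro x hx
          have : N - (x + 1) = N - 1 - x := by omega
          rw [this]
        rw [Finset.sum_congr rfl e3]
        simp only [Nat.choose_zero_right, Nat.cast_one, one_smul, Nat.sub_zero, gN_zero]
        ring
      · rw [Finset.sum_range_succ]
        simp
    rw [hsplit, ih']
    ring


lemma X1_eq_monomial : (X 1 : MvPolynomial (Fin 2) ℤ) = monomial (fm 0 1) 1 := by
  have h : fm 0 1 = Finsupp.single 1 1 := by
    ext i; fin_cases i <;> simp [fm, Finsupp.single_apply]
  rw [h]
  rfl

variable (A : ℕ → ℕ → ℤ)

lemma expand (h00 : A 0 0 = 1)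
    (hrec : ∀ n k : ℕ, (n, k) ≠ (0, 0) →
      A n k = (n + 1) * (if k = 0 then 0 else A n (k - 1)) +
        (k + 1) * (if n = 0 then 0 else A (n - 1) (k + 1))) :
    ∀ j, gN j = ∑ l ∈ range (j / 2 + 1),
      monomial (fm (j - 2 * l) (l + 1)) (A l (j - 2 * l)) := by
  intro j
  induction j with
  | zero => simp [gN_zero, X1_eq_monomial, h00]
  | succ j ih =>
    rw [gN_succ, ih, dd_sum]
    have hL : ∀ l ∈ range (j / 2 + 1),
        dd (monomial (fm (j - 2 * l) (l + 1)) (A l (j - 2 * l))) =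
          monomial (fm (j - 2 * l - 1) (l + 2)) (A l (j - 2 * l) * (j - 2 * l : ℕ)) +
          monomial (fm (j - 2 * l + 1) (l + 1)) (A l (j - 2 * l) * ((l : ℤ) + 1)) := by
      intro l _; exact dd_monomial _ _ _
    rw [Finset.sum_congr rfl hL, Finset.sum_add_distrib]
    have hR : ∀ l ∈ range ((j + 1) / 2 + 1),
        monomial (fm (j + 1 - 2 * l) (l + 1)) (A l (j + 1 - 2 * l)) =
          monomial (fm (j + 1 - 2 * l) (l + 1))
            (((j + 1 - 2 * l : ℕ) + 1) * (if l = 0 then 0 else A (l - 1) (j + 1 - 2 * l + 1))) +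
          monomial (fm (j + 1 - 2 * l) (l + 1))
            (((l : ℤ) + 1) * (if j + 1 - 2 * l = 0 then 0 else A l (j + 1 - 2 * l - 1))) := by
      intro l _
      rw [← map_add]
      congr 1
      rw [hrec l (j + 1 - 2 * l) (by
        simp only [ne_eq, Prod.mk.injEq, not_and]
        intro hl; subst hl; omega)]
      ring
    rw [Finset.sum_congr rfl hR, Finset.sum_add_distrib]
    congr 1
    · -- ∑ M1 = ∑ S2
      rw [Finset.sum_range_succ' (fun l => monomial (fm (j + 1 - 2 * l) (l + 1))
          (((j + 1 - 2 * l : ℕ) + 1) * (if l = 0 then 0 else A (l - 1) (j + 1 - 2 * l + 1))))]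
      norm_num
      have hsub : ∑ l ∈ range ((j + 1) / 2),
            monomial (fm (j - 2 * l - 1) (l + 2)) (A l (j - 2 * l) * ((j - 2 * l : ℕ) : ℤ)) =
          ∑ l ∈ range (j / 2 + 1),
            monomial (fm (j - 2 * l - 1) (l + 2)) (A l (j - 2 * l) * ((j - 2 * l : ℕ) : ℤ)) := by
        apply Finset.sum_subset (Finset.range_subset_range.mpr (show (j + 1) / 2 ≤ j / 2 + 1 by omega))
        intro l hl hnl
        simp only [mem_range] at hl hnl
        have h2l : j - 2 * l = 0 := by omega
        rw [h2l]
        simp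
      rw [← hsub]
      apply Finset.sum_congr rfl
      intro l hl
      simp only [mem_range] at hl
      have e2 : j + 1 - 2 * (l + 1) + 1 = j - 2 * l := by omega
      have e1 : j + 1 - 2 * (l + 1) = j - 2 * l - 1 := by omega
      have ecast : ((j - 2 * l : ℕ) : ℤ) = ((j - 2 * l - 1 : ℕ) : ℤ) + 1 := by omega
      rw [e2, e1, ← ecast]
      exact congrArg _ (mul_comm _ _)
    · -- ∑ M2 = ∑ S1
      have hsub : ∑ l ∈ range (j / 2 + 1),
            monomial (fm (j + 1 - 2 * l) (l + 1))
              (((l : ℤ) + 1) * (if j + 1 - 2 * l = 0 then 0 else A l (j + 1 - 2 * l - 1))) =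
          ∑ l ∈ range ((j + 1) / 2 + 1),
            monomial (fm (j + 1 - 2 * l) (l + 1))
              (((l : ℤ) + 1) * (if j + 1 - 2 * l = 0 then 0 else A l (j + 1 - 2 * l - 1))) := by
        apply Finset.sum_subset (Finset.range_subset_range.mpr (show j / 2 + 1 ≤ (j + 1) / 2 + 1 by omega))
        intro l hl hnl
        simp only [mem_range] at hl hnl
        have h2l : j + 1 - 2 * l = 0 := by omega
        rw [if_pos h2l]
        simp
      rw [← hsub]
      apply Finset.sum_congr rfl
      intro l hl
      simp only [mem_range] at hl
      have h2l : j + 1 - 2 * l ≠ 0 := by omega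
      rw [if_neg h2l]
      have e2 : j + 1 - 2 * l - 1 = j - 2 * l := by omega
      have e1 : j + 1 - 2 * l = j - 2 * l + 1 := by omega
      rw [e2, e1]
      exact congrArg _ (mul_comm _ _)


section
variable (A : ℕ → ℕ → ℤ)
variable (hexp : ∀ j, gN j = ∑ l ∈ range (j / 2 + 1),
      monomial (fm (j - 2 * l) (l + 1)) (A l (j - 2 * l)))

include hexp

/-- (a) diagonal coefficient of gN. -/
lemma coeff_gN (n k : ℕ) : coeff (fm k (n + 1)) (gN (2 * n + k)) = A n k := by
  rw [hexp, coeff_sum]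
  rw [Finset.sum_eq_single n]
  · rw [coeff_monomial, if_pos (by rw [fm_eq_iff]; omega)]
    congr 1
    omega
  · intro l hl hln
    rw [coeff_monomial, if_neg]
    rw [fm_eq_iff]
    omega
  · intro hn
    exact absurd (mem_range.mpr (by omega)) hn

/-- (b) coefficient of X0 * gN M. -/
lemma coeff_X0_gN (n k M : ℕ) (hM : 2 * n + k = M + 1) :
    coeff (fm k (n + 1)) (X 0 * gN M) = if k = 0 then 0 else A n (k - 1) := by
  rw [hexp, Finset.mul_sum]
  have hterm : ∀ l ∈ range (M / 2 + 1),
      X 0 * monomial (fm (M - 2 * l) (l + 1)) (A l (M - 2 * l)) =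
        monomial (fm (M - 2 * l + 1) (l + 1)) (A l (M - 2 * l)) := by
    intro l _
    rw [X_mul_monomial', single0_eq_fm, fm_add]
    congr 2
    rw [fm_eq_iff]
    omega
  rw [Finset.sum_congr rfl hterm, coeff_sum]
  rcases Nat.eq_zero_or_pos k with hk | hk
  · subst hk
    rw [if_pos rfl]
    apply Finset.sum_eq_zero
    intro l hl
    rw [coeff_monomial, if_neg]
    rw [fm_eq_iff]
    omega
  · rw [if_neg (by omega)]
    rw [Finset.sum_eq_single n]
    · rw [coeff_monomial, if_pos (by rw [fm_eq_iff]; omega)]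
      congr 1
      omega
    · intro l hl hln
      rw [coeff_monomial, if_neg]
      rw [fm_eq_iff]
      omega
    · intro hn
      exact absurd (mem_range.mpr (by omega)) hn

/-- (c) coefficient of a product gN i * gN (M-1-i). -/
lemma coeff_gN_mul (n k M i : ℕ) (hM : 2 * n + k = M + 1) (hi : i < M) :
    coeff (fm k (n + 1)) (gN i * gN (M - 1 - i)) =
      ∑ l ∈ range n, (if 2 * l ≤ i ∧ i ≤ 2 * l + k
        then A l (i - 2 * l) * A (n - 1 - l) (k - (i - 2 * l)) else 0) := by
  rw [hexp i, hexp (M - 1 - i), Finset.sum_mul_sum]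
  have hterm : ∀ l ∈ range (i / 2 + 1), ∀ l' ∈ range ((M - 1 - i) / 2 + 1),
      monomial (fm (i - 2 * l) (l + 1)) (A l (i - 2 * l)) *
        monomial (fm (M - 1 - i - 2 * l') (l' + 1)) (A l' (M - 1 - i - 2 * l')) =
      monomial (fm (i - 2 * l + (M - 1 - i - 2 * l')) (l + l' + 2))
        (A l (i - 2 * l) * A l' (M - 1 - i - 2 * l')) := by
    intro l _ l' _
    rw [monomial_mul, fm_add]
    congr 2
    rw [fm_eq_iff]
    omega
  rw [Finset.sum_congr rfl (fun l hl => Finset.sum_congr rfl (hterm l hl)), coeff_sum]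
  have hinner : ∀ l ∈ range (i / 2 + 1),
      coeff (fm k (n + 1)) (∑ l' ∈ range ((M - 1 - i) / 2 + 1),
        monomial (fm (i - 2 * l + (M - 1 - i - 2 * l')) (l + l' + 2))
          (A l (i - 2 * l) * A l' (M - 1 - i - 2 * l'))) =
      (if 2 * l ≤ i ∧ i ≤ 2 * l + k ∧ l < n
        then A l (i - 2 * l) * A (n - 1 - l) (k - (i - 2 * l)) else 0) := by
    intro l hl
    simp only [mem_range] at hl
    rw [coeff_sum, Finset.sum_eq_single (n - 1 - l)]
    · rw [coeff_monomial]
      by_cases hcond : 2 * l ≤ i ∧ i ≤ 2 * l + k ∧ l < n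
      · rw [if_pos (by rw [fm_eq_iff]; omega), if_pos hcond]
        congr 2
        omega
      · rw [if_neg (by rw [fm_eq_iff]; omega), if_neg hcond]
    · intro l' hl' hne
      rw [coeff_monomial, if_neg]
      rw [fm_eq_iff]
      omega
    · intro hnmem
      simp only [mem_range, not_lt] at hnmem
      rw [coeff_monomial, if_neg]
      rw [fm_eq_iff]
      omega
  rw [Finset.sum_congr rfl hinner]
  -- now turn a sum over range (i/2+1) with guard (l < n) into a sum over range n
  rw [Finset.sum_subset (Finset.range_subset_range.mpr (show i / 2 + 1 ≤ i / 2 + 1 + n by omega))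
      (by
        intro l hl hnl
        simp only [mem_range] at hl hnl
        rw [if_neg]
        omega)]
  rw [← Finset.sum_subset (Finset.range_subset_range.mpr (show n ≤ i / 2 + 1 + n by omega))
      (by
        intro l hl hnl
        simp only [mem_range] at hl hnl
        rw [if_neg]
        omega)]
  apply Finset.sum_congr rfl
  intro l hl
  simp only [mem_range] at hl
  by_cases hc : 2 * l ≤ i ∧ i ≤ 2 * l + k
  · rw [if_pos ⟨hc.1, hc.2, hl⟩, if_pos hc]
  · rw [if_neg (by tauto), if_neg hc]

end

/-- window sum lemma -/
lemma sum_window (Mr a klim : ℕ) (f : ℕ → ℤ) (h : a + klim < Mr) :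
    ∑ i ∈ range Mr, (if a ≤ i ∧ i ≤ a + klim then f i else 0) =
      ∑ m ∈ range (klim + 1), f (a + m) := by
  simp_rw [← Finset.mem_Icc]
  rw [Finset.sum_ite_mem]
  have h2 : range Mr ∩ Finset.Icc a (a + klim) = Finset.Icc a (a + klim) := by
    apply Finset.inter_eq_right.mpr
    intro x hx
    simp only [Finset.mem_Icc] at hx
    exact mem_range.mpr (by omega)
  rw [h2, ← Finset.Ico_add_one_right_eq_Icc, Finset.sum_Ico_eq_sum_range]
  apply Finset.sum_congr
  · congr 1
    omega
  · intro m _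
    rfl


end AndreAux

open AndreAux

/-- **Recurrences for the André numbers.**  If `A : ℕ → ℕ → ℤ` satisfies `A 0 0 = 1` and the
linear recursion `A n k = (n+1)·A n (k-1) + (k+1)·A (n-1) (k+1)` for `(n,k) ≠ (0,0)` (terms
with a negative index being `0`), then `A` also satisfies the quadratic recursion
`A n k = A n (k-1) + ∑_{l=0}^{n-1} ∑_{m=0}^{k} C(2n+k-1, 2l+m) · A l m · A (n-1-l) (k-m)`. -/
theorem andre_quadratic_recursion (A : ℕ → ℕ → ℤ) (h00 : A 0 0 = 1)
    (hrec : ∀ n k : ℕ, (n, k) ≠ (0, 0) →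
      A n k = (n + 1) * (if k = 0 then 0 else A n (k - 1)) +
        (k + 1) * (if n = 0 then 0 else A (n - 1) (k + 1))) :
    ∀ n k : ℕ, (n, k) ≠ (0, 0) →
      A n k = (if k = 0 then 0 else A n (k - 1)) +
        ∑ l ∈ Finset.range n, ∑ m ∈ Finset.range (k + 1),
          ((2 * n + k - 1).choose (2 * l + m) : ℤ) * A l m * A (n - 1 - l) (k - m) := by
  intro n k hnk
  have hnk' : ¬(n = 0 ∧ k = 0) := by
    intro ⟨h1, h2⟩; exact hnk (by rw [h1, h2])
  have hexp := expand A h00 hrec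
  obtain ⟨M, hM⟩ : ∃ M, 2 * n + k = M + 1 := ⟨2 * n + k - 1, by omega⟩
  have h1 : A n k = coeff (fm k (n + 1)) (gN (M + 1)) := by
    rw [← hM, coeff_gN A hexp]
  rw [h1, key M, coeff_add, coeff_sum, coeff_X0_gN A hexp n k M hM]
  congr 1
  have h2 : ∀ i ∈ range M,
      coeff (fm k (n + 1)) ((M.choose (i + 1) : ℤ) • (gN i * gN (M - 1 - i))) =
        ∑ l ∈ range n, (if 2 * l ≤ i ∧ i ≤ 2 * l + k
          then (M.choose (i + 1) : ℤ) * A l (i - 2 * l) * A (n - 1 - l) (k - (i - 2 * l))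
          else 0) := by
    intro i hi
    rw [coeff_smul, coeff_gN_mul A hexp n k M i hM (mem_range.mp hi), smul_eq_mul,
      Finset.mul_sum]
    apply Finset.sum_congr rfl
    intro l _
    split <;> ring
  rw [Finset.sum_congr rfl h2, Finset.sum_comm]
  -- now : ∑ l ∈ range n, ∑ i ∈ range M, ite ... = ∑ l, ∑ m, goalterm
  rw [← Finset.sum_range_reflect (fun l => ∑ m ∈ Finset.range (k + 1),
      ((2 * n + k - 1).choose (2 * l + m) : ℤ) * A l m * A (n - 1 - l) (k - m)) n]
  apply Finset.sum_congr rfl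
  intro l hl
  simp only [mem_range] at hl
  rw [sum_window M (2 * l) k _ (by omega)]
  rw [← Finset.sum_range_reflect (fun m =>
      ((2 * n + k - 1).choose (2 * (n - 1 - l) + m) : ℤ) * A (n - 1 - l) m *
        A (n - 1 - (n - 1 - l)) (k - m)) (k + 1)]
  apply Finset.sum_congr rfl
  intro m hm
  simp only [mem_range] at hm
  have e1 : 2 * l + m - 2 * l = m := by omega
  have e2 : n - 1 - (n - 1 - l) = l := by omega
  have e3 : k + 1 - 1 - m = k - m := by omega
  have e4 : k - (k - m) = m := by omega
  rw [e1, e3, e2, e4]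
  have hc : (2 * n + k - 1).choose (2 * (n - 1 - l) + (k - m)) = M.choose (2 * l + m + 1) := by
    rw [show 2 * (n - 1 - l) + (k - m) = M - (2 * l + m + 1) by omega,
      show 2 * n + k - 1 = M by omega]
    exact Nat.choose_symm (by omega)
  rw [hc]
  ring
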